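/- Let k ≥ 1 be an integer and let ξ : [0,1] → ℝ be k-times absolutely continuous with integrable k-th derivative ξ^{(k)}. Then for all n ≥ 1 and all integers i with k ≤ i ≤ n one has the representation Δ_{i,k}^n ξ = ∫_{(i−1)/n}^{i/n} ∫_{s_1−1/n}^{s_1} ⋯ ∫_{s_{k−1}−1/n}^{s_{k−1}} ξ^{(k)}(s_k) ds_k ⋯ ds_1, and consequently the estimate |n^k Δ_{i,k}^n ξ| ≤ k^{k−1} ∫_{(i−k)/n}^{i/n} n |ξ^{(k)}(s)| ds. -/

import Mathlib

open MeasureTheory Filter Set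

/-- The `k`-th order increment `Δ_{i,k}^n ξ = ∑_{j=0}^k (-1)^j (k choose j) ξ((i-j)/n)`. -/
noncomputable def kthIncrement (ξ : ℝ → ℝ) (k n i : ℕ) : ℝ :=
  ∑ j ∈ Finset.range (k + 1), (-1 : ℝ) ^ j * (k.choose j : ℝ) * ξ (((i : ℝ) - (j : ℝ)) / (n : ℝ))

/-- The nested integral operator: `nestedInt h n 0 = h` and
`nestedInt h n (m+1) s = ∫_{s-1/n}^{s} nestedInt h n m u du`, so that
`nestedInt ξ⁽ᵏ⁾ n k (i/n)` is the `k`-fold iterated integral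
`∫_{(i−1)/n}^{i/n} ∫_{s₁−1/n}^{s₁} ⋯ ∫_{s_{k−1}−1/n}^{s_{k−1}} ξ⁽ᵏ⁾(s_k) ds_k ⋯ ds₁`. -/
noncomputable def nestedInt (h : ℝ → ℝ) (n : ℕ) : ℕ → ℝ → ℝ
  | 0, s => h s
  | (m + 1), s => ∫ u in (s - 1 / (n : ℝ))..s, nestedInt h n m u

/-- equation (4.24) of the paper: for a `k`-times absolutely continuous
`ξ : [0,1] → ℝ` with integrable `k`-th derivative (given by the chain `D` with `D 0 = ξ`),
the increment `Δ_{i,k}^n ξ` equals the iterated integral of `ξ^{(k)} = D k`, and consequently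
`|n^k Δ_{i,k}^n ξ| ≤ k^{k−1} ∫_{(i−k)/n}^{i/n} n |ξ^{(k)}(s)| ds`. -/
lemma alt_sum_pascal (m : ℕ) (g : ℕ → ℝ) :
    ∑ j ∈ Finset.range (m + 2), (-1 : ℝ) ^ j * ((m+1).choose j : ℝ) * g j
      = ∑ j ∈ Finset.range (m + 1), (-1 : ℝ) ^ j * (m.choose j : ℝ) * (g j - g (j+1)) := by
  have e0 : (∑ j ∈ Finset.range (m + 1), (-1 : ℝ) ^ (j+1) * (m.choose (j+1) : ℝ) * g (j+1))
        + g 0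
      = ∑ j ∈ Finset.range (m + 1), (-1 : ℝ) ^ j * (m.choose j : ℝ) * g j := by
    have := Finset.sum_range_succ' (fun j => (-1 : ℝ) ^ j * (m.choose j : ℝ) * g j) (m+1)
    rw [Finset.sum_range_succ, Nat.choose_succ_self] at this
    simpa using this.symm
  rw [Finset.sum_range_succ']
  have lsplit : ∀ j ∈ Finset.range (m+1),
      (-1 : ℝ) ^ (j+1) * ((m+1).choose (j+1) : ℝ) * g (j+1)
        = -((-1 : ℝ) ^ j * (m.choose j : ℝ) * g (j+1))
          + (-1 : ℝ) ^ (j+1) * (m.choose (j+1) : ℝ) * g (j+1) := by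
    intro j _
    rw [Nat.choose_succ_succ, Nat.cast_add]
    ring
  have rsplit : ∀ j ∈ Finset.range (m+1),
      (-1 : ℝ) ^ j * (m.choose j : ℝ) * (g j - g (j+1))
        = (-1 : ℝ) ^ j * (m.choose j : ℝ) * g j
          - (-1 : ℝ) ^ j * (m.choose j : ℝ) * g (j+1) := by
    intro j _; ring
  rw [Finset.sum_congr rfl lsplit, Finset.sum_congr rfl rsplit,
    Finset.sum_add_distrib, Finset.sum_sub_distrib, Finset.sum_neg_distrib]
  simp only [Nat.choose_zero_right, Nat.cast_one]
  linarith [e0]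

lemma main_rep {k : ℕ} (hk : 1 ≤ k) (D : ℕ → ℝ → ℝ)
    (hAC : ∀ j < k, IntervalIntegrable (D (j + 1)) volume 0 1 ∧
      ∀ s ∈ Set.Icc (0 : ℝ) 1, ∀ t ∈ Set.Icc (0 : ℝ) 1,
        D j t - D j s = ∫ u in s..t, D (j + 1) u)
    (n : ℕ) (hn : 1 ≤ n) :
    ∀ m, m ≤ k → ∀ s : ℝ, (m : ℝ) / n ≤ s → s ≤ 1 →
      ∑ j ∈ Finset.range (m + 1), (-1 : ℝ) ^ j * (m.choose j : ℝ) * D (k - m) (s - (j : ℝ) / n)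
        = nestedInt (D k) n m s := by
  have npos : (0 : ℝ) < n := by exact_mod_cast hn
  intro m
  induction m with
  | zero => intro _ s _ _; simp [nestedInt]
  | succ m IH =>
    intro hmk s hs0 hs1
    have hmk' : m ≤ k := Nat.le_of_succ_le hmk
    have hsub : k - (m + 1) + 1 = k - m := by omega
    have hs0' : ((m : ℝ) + 1) / n ≤ s := by push_cast at hs0; exact hs0
    have hIkm : IntervalIntegrable (D (k - m)) volume 0 1 := by
      have := (hAC (k - (m + 1)) (by omega)).1
      rwa [hsub] at this
    -- step 1: pascal
    have pas := alt_sum_pascal m (fun j => D (k - (m+1)) (s - (j : ℝ) / n))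
    rw [show m + 1 + 1 = m + 2 from rfl, pas]
    -- step 2: differences to integrals
    have key : ∀ j ∈ Finset.range (m + 1),
        (-1 : ℝ) ^ j * (m.choose j : ℝ) *
          (D (k - (m+1)) (s - (j : ℝ) / n) - D (k - (m+1)) (s - ((j+1 : ℕ) : ℝ) / n))
          = ∫ u in (s - 1 / (n : ℝ))..s,
              (-1 : ℝ) ^ j * (m.choose j : ℝ) * D (k - m) (u - (j : ℝ) / n) := by
      intro j hj
      have hjm : (j : ℝ) ≤ m := by exact_mod_cast Nat.lt_succ_iff.mp (Finset.mem_range.mp hj)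
      have hj1 : ((j : ℝ) + 1) / n ≤ ((m : ℝ) + 1) / n := by gcongr
      have h1 : s - ((j : ℝ) + 1) / n ∈ Set.Icc (0:ℝ) 1 := by
        constructor
        · linarith
        · have : 0 ≤ ((j : ℝ) + 1) / n := by positivity
          linarith
      have h2 : s - (j : ℝ) / n ∈ Set.Icc (0:ℝ) 1 := by
        constructor
        · have : (j : ℝ) / n ≤ ((j : ℝ) + 1) / n := by gcongr; linarith
          linarith [h1.1]
        · have : 0 ≤ (j : ℝ) / n := by positivity
          linarith
      have hd := (hAC (k - (m + 1)) (by omega)).2 _ h1 _ h2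
      rw [hsub] at hd
      have hshift := intervalIntegral.integral_comp_sub_right
        (a := s - 1 / (n:ℝ)) (b := s) (f := D (k - m)) ((j : ℝ) / n)
      have hep : s - 1 / (n:ℝ) - (j : ℝ) / n = s - ((j : ℝ) + 1) / n := by
        field_simp
        ring
      rw [hep] at hshift
      push_cast
      rw [hd, ← hshift, ← intervalIntegral.integral_const_mul]
    rw [Finset.sum_congr rfl key]
    -- step 3: swap sum and integral
    have hint : ∀ j ∈ Finset.range (m + 1),
        IntervalIntegrable (fun u => (-1 : ℝ) ^ j * (m.choose j : ℝ) * D (k - m) (u - (j : ℝ) / n))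
          volume (s - 1 / (n:ℝ)) s := by
      intro j hj
      have hjm : (j : ℝ) ≤ m := by exact_mod_cast Nat.lt_succ_iff.mp (Finset.mem_range.mp hj)
      have hjn0 : (0:ℝ) ≤ (j:ℝ)/n := by positivity
      have hsubset : Set.uIcc (s - 1/(n:ℝ)) s ⊆ Set.uIcc ((0:ℝ) + (j:ℝ)/n) ((1:ℝ) + (j:ℝ)/n) := by
        rw [Set.uIcc_of_le (by linarith [show (0:ℝ) < 1/(n:ℝ) by positivity]),
          Set.uIcc_of_le (by linarith)]
        apply Set.Icc_subset_Icc
        · have hj1 : ((j : ℝ) + 1) / n ≤ ((m : ℝ) + 1) / n := by gcongr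
          have e : (j:ℝ)/n + 1/n = ((j:ℝ)+1)/n := by ring
          linarith
        · linarith
      exact ((hIkm.comp_sub_right ((j : ℝ) / n)).mono_set hsubset).const_mul _
    rw [← intervalIntegral.integral_finset_sum hint]
    -- step 4: congr to nested integral
    have hcong : Set.EqOn
        (fun u => ∑ j ∈ Finset.range (m + 1),
          (-1 : ℝ) ^ j * (m.choose j : ℝ) * D (k - m) (u - (j : ℝ) / n))
        (nestedInt (D k) n m) (Set.uIcc (s - 1 / (n:ℝ)) s) := by
      intro u hu
      rw [Set.uIcc_of_le (by linarith [show (0:ℝ) < 1/(n:ℝ) by positivity])] at hu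
      have e : ((m:ℝ)+1)/n = (m:ℝ)/n + 1/n := by ring
      exact IH hmk' u (by have := hu.1; linarith) (le_trans hu.2 hs1)
    rw [intervalIntegral.integral_congr hcong]
    rfl

lemma nested_bound (h : ℝ → ℝ) (hI : IntervalIntegrable h volume 0 1) (n : ℕ) (hn : 1 ≤ n) :
    ∀ m : ℕ, 1 ≤ m → ∀ s : ℝ, (m : ℝ) / n ≤ s → s ≤ 1 →
      |nestedInt h n m s| ≤ (1 / (n : ℝ)) ^ (m - 1) * ∫ u in (s - (m : ℝ) / n)..s, |h u| := by
  have npos : (0 : ℝ) < n := by exact_mod_cast hn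
  intro m hm
  induction m, hm using Nat.le_induction with
  | base =>
    intro s hs0 hs1
    have hle : s - 1 / (n:ℝ) ≤ s := sub_le_self _ (by positivity)
    have := intervalIntegral.abs_integral_le_integral_abs (f := h) (a := s - 1/(n:ℝ)) (b := s)
      (μ := volume) hle
    simpa [nestedInt] using this
  | succ m hm IH =>
    intro s hs0 hs1
    have hs0' : ((m : ℝ) + 1) / n ≤ s := by push_cast at hs0; exact hs0
    have hinv : (0:ℝ) < 1/n := by positivity
    have hIabs : IntervalIntegrable (fun u => |h u|) volume (s - ((m:ℝ)+1)/n) s := by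
      apply hI.abs.mono_set
      rw [Set.uIcc_of_le (by positivity : (0:ℝ) ≤ 1), Set.uIcc_of_le (by
        have : (0:ℝ) ≤ ((m:ℝ)+1)/n := by positivity
        linarith)]
      apply Set.Icc_subset_Icc <;> linarith
    set C := (1 / (n : ℝ)) ^ (m - 1) * ∫ u in (s - ((m:ℝ)+1)/n)..s, |h u| with hC
    have hbd : ∀ u ∈ Set.uIoc (s - 1/(n:ℝ)) s, ‖nestedInt h n m u‖ ≤ C := by
      intro u hu
      rw [Set.uIoc_of_le (by linarith)] at hu
      have hu1 : s - 1/(n:ℝ) < u := hu.1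
      have hu2 : u ≤ s := hu.2
      have em : ((m:ℝ)+1)/n = (m:ℝ)/n + 1/n := by ring
      have h1 := IH u (by linarith) (by linarith)
      have hmono : (∫ v in (u - (m:ℝ)/n)..u, |h v|) ≤ ∫ v in (s - ((m:ℝ)+1)/n)..s, |h v| := by
        apply intervalIntegral.integral_mono_interval (by linarith) (by
          have : (0:ℝ) ≤ (m:ℝ)/n := by positivity
          linarith) (by linarith) ?_ hIabs
        filter_upwards with x using abs_nonneg _
      rw [Real.norm_eq_abs]
      calc |nestedInt h n m u| ≤ (1 / (n : ℝ)) ^ (m - 1) * ∫ v in (u - (m:ℝ)/n)..u, |h v| := h1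
        _ ≤ C := by
            rw [hC]
            gcongr
    have := intervalIntegral.norm_integral_le_of_norm_le_const
      (a := s - 1/(n:ℝ)) (b := s) (C := C) (f := nestedInt h n m) hbd
    have habs : |s - (s - 1/(n:ℝ))| = 1/(n:ℝ) := by
      rw [abs_of_nonneg] <;> [skip; linarith] ; ring
    rw [Real.norm_eq_abs] at this
    have hp : (1/(n:ℝ))^(m-1) * (1/n) = (1/n)^m := by
      rw [← pow_succ]
      congr 1
      omega
    have e2 : C * |s - (s - 1/(n:ℝ))| = (1/(n:ℝ))^m * ∫ u in (s - ((m:ℝ)+1)/n)..s, |h u| := by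
      rw [habs, hC, ← hp]
      ring
    calc |nestedInt h n (m+1) s| ≤ C * |s - (s - 1/(n:ℝ))| := by
          simpa [nestedInt] using this
      _ = (1/(n:ℝ))^m * ∫ u in (s - ((m:ℝ)+1)/n)..s, |h u| := e2
      _ = (1/(n:ℝ))^(m+1-1) * ∫ u in (s - ((m+1:ℕ):ℝ)/n)..s, |h u| := by
          push_cast
          norm_num

theorem statement1
    {k : ℕ} (hk : 1 ≤ k)
    (ξ : ℝ → ℝ) (D : ℕ → ℝ → ℝ) (hD0 : D 0 = ξ)
    (hAC : ∀ j < k, IntervalIntegrable (D (j + 1)) volume 0 1 ∧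
      ∀ s ∈ Set.Icc (0 : ℝ) 1, ∀ t ∈ Set.Icc (0 : ℝ) 1,
        D j t - D j s = ∫ u in s..t, D (j + 1) u) :
    ∀ n : ℕ, 1 ≤ n → ∀ i : ℕ, k ≤ i → i ≤ n →
      kthIncrement ξ k n i = nestedInt (D k) n k ((i : ℝ) / (n : ℝ)) ∧
      |(n : ℝ) ^ k * kthIncrement ξ k n i| ≤
        (k : ℝ) ^ (k - 1) *
          ∫ s in (((i : ℝ) - (k : ℝ)) / (n : ℝ))..((i : ℝ) / (n : ℝ)), (n : ℝ) * |D k s| := by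
  intro n hn i hki hin
  have npos : (0 : ℝ) < n := by exact_mod_cast hn
  have hki' : (k : ℝ) ≤ i := by exact_mod_cast hki
  have hin' : (i : ℝ) ≤ n := by exact_mod_cast hin
  have hsk : (k : ℝ) / n ≤ (i : ℝ) / n := by gcongr
  have hle1 : (i : ℝ) / n ≤ 1 := by
    rw [div_le_one npos]; exact hin'
  have heq : kthIncrement ξ k n i = nestedInt (D k) n k ((i : ℝ) / n) := by
    have h0 : kthIncrement ξ k n i
        = ∑ j ∈ Finset.range (k + 1),
            (-1 : ℝ) ^ j * (k.choose j : ℝ) * D (k - k) ((i : ℝ) / n - (j : ℝ) / n) := by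
      unfold kthIncrement
      refine Finset.sum_congr rfl fun j _ => ?_
      rw [Nat.sub_self, hD0, sub_div]
    rw [h0]
    exact main_rep hk D hAC n hn k le_rfl _ hsk hle1
  refine ⟨heq, ?_⟩
  have hIk : IntervalIntegrable (D k) volume 0 1 := by
    have := (hAC (k - 1) (by omega)).1
    rwa [show k - 1 + 1 = k by omega] at this
  have hb := nested_bound (D k) hIk n hn k hk ((i : ℝ) / n) hsk hle1
  rw [heq, abs_mul, abs_of_nonneg (pow_nonneg npos.le _)]
  have hpk : (n : ℝ) ^ k * (1 / n) ^ (k - 1) = n := by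
    rw [show k = k - 1 + 1 by omega, pow_succ, one_div, inv_pow]
    field_simp
    rw [Nat.add_sub_cancel]
  have hJ0 : (0 : ℝ) ≤ ∫ u in ((i : ℝ) / n - (k : ℝ) / n)..((i : ℝ) / n), |D k u| := by
    apply intervalIntegral.integral_nonneg
    · have : (0 : ℝ) ≤ (k : ℝ) / n := by positivity
      linarith
    · intro u _; exact abs_nonneg _
  have hk1 : (1 : ℝ) ≤ (k : ℝ) ^ (k - 1) := by
    apply one_le_pow₀
    exact_mod_cast hk
  calc (n : ℝ) ^ k * |nestedInt (D k) n k ((i : ℝ) / n)|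
      ≤ (n : ℝ) ^ k * ((1 / (n : ℝ)) ^ (k - 1) *
          ∫ u in ((i : ℝ) / n - (k : ℝ) / n)..((i : ℝ) / n), |D k u|) := by
        apply mul_le_mul_of_nonneg_left hb (by positivity)
    _ = (n : ℝ) * ∫ u in ((i : ℝ) / n - (k : ℝ) / n)..((i : ℝ) / n), |D k u| := by
        rw [← mul_assoc, hpk]
    _ = ∫ s in (((i : ℝ) - (k : ℝ)) / (n : ℝ))..((i : ℝ) / (n : ℝ)), (n : ℝ) * |D k s| := by
        rw [intervalIntegral.integral_const_mul, sub_div]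
    _ ≤ (k : ℝ) ^ (k - 1) *
          ∫ s in (((i : ℝ) - (k : ℝ)) / (n : ℝ))..((i : ℝ) / (n : ℝ)), (n : ℝ) * |D k s| := by
        have hnn : (0 : ℝ) ≤ ∫ s in (((i : ℝ) - (k : ℝ)) / (n : ℝ))..((i : ℝ) / (n : ℝ)),
            (n : ℝ) * |D k s| := by
          rw [sub_div, intervalIntegral.integral_const_mul]
          exact mul_nonneg npos.le hJ0
        nlinarith
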